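/- There is no twice differentiable function h : [0,∞) → ℝ with h(0) = 1, h'(0) = 1 satisfying h''(t) = h'(t)² h(t) for all t ≥ 0; i.e., any solution of h'' = (h')² h with these initial conditions blows up in finite time. -/

import Mathlib

open Set

theorem stmt_4 :
    ¬ ∃ h : ℝ → ℝ,
      (∀ t : ℝ, 0 ≤ t → DifferentiableAt ℝ h t ∧ DifferentiableAt ℝ (deriv h) t) ∧
      h 0 = 1 ∧ deriv h 0 = 1 ∧
      ∀ t : ℝ, 0 ≤ t → deriv (deriv h) t = (deriv h t) ^ 2 * h t := by
  rintro ⟨h, hdiff, h0, h'0, hode⟩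
  -- Step 1: positivity of h and deriv h on [0, ∞)
  -- key monotonicity helper: if h, h' > 0 on [0, T), then h' ≥ 1 and h ≥ 1 on [0, T]
  have key : ∀ T : ℝ, 0 ≤ T → (∀ s, 0 ≤ s → s < T → 0 < h s ∧ 0 < deriv h s) →
      (∀ s ∈ Icc (0:ℝ) T, 1 ≤ deriv h s) ∧ (∀ s ∈ Icc (0:ℝ) T, 1 ≤ h s) := by
    intro T hT hpos
    have hint : interior (Icc (0:ℝ) T) = Ioo 0 T := interior_Icc
    have hsub : Icc (0:ℝ) T ⊆ Ici 0 := fun s hs => hs.1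
    have hcont' : ContinuousOn (deriv h) (Icc 0 T) := fun s hs =>
      ((hdiff s hs.1).2.continuousAt).continuousWithinAt
    have hdiff' : DifferentiableOn ℝ (deriv h) (interior (Icc (0:ℝ) T)) := by
      rw [hint]; exact fun s hs => ((hdiff s hs.1.le).2).differentiableWithinAt
    have hmono' : MonotoneOn (deriv h) (Icc 0 T) := by
      apply monotoneOn_of_deriv_nonneg (convex_Icc 0 T) hcont' hdiff'
      intro s hs
      rw [hint] at hs
      rw [hode s hs.1.le]
      obtain ⟨hp1, hp2⟩ := hpos s hs.1.le hs.2
      positivity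
    have h'ge : ∀ s ∈ Icc (0:ℝ) T, 1 ≤ deriv h s := by
      intro s hs
      have := hmono' (left_mem_Icc.2 hT) hs hs.1
      rwa [h'0] at this
    refine ⟨h'ge, ?_⟩
    have hmono : MonotoneOn h (Icc 0 T) := by
      apply monotoneOn_of_deriv_nonneg (convex_Icc 0 T)
        (fun s hs => ((hdiff s hs.1).1.continuousAt).continuousWithinAt)
        (by rw [hint]; exact fun s hs => ((hdiff s hs.1.le).1).differentiableWithinAt)
      intro s hs
      rw [hint] at hs
      exact le_trans zero_le_one (h'ge s ⟨hs.1.le, hs.2.le⟩)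
    intro s hs
    have := hmono (left_mem_Icc.2 hT) hs hs.1
    rwa [h0] at this
  have pos : ∀ t : ℝ, 0 ≤ t → 0 < h t ∧ 0 < deriv h t := by
    by_contra hc
    push_neg at hc
    set B : Set ℝ := {t | 0 ≤ t ∧ (h t ≤ 0 ∨ deriv h t ≤ 0)} with hB
    have hBne : B.Nonempty := by
      obtain ⟨t, ht, hor⟩ := hc
      refine ⟨t, ht, ?_⟩
      by_cases h1 : 0 < h t
      · exact Or.inr (hor h1)
      · exact Or.inl (not_lt.1 h1)
    have hBbdd : BddBelow B := ⟨0, fun t ht => ht.1⟩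
    set T := sInf B with hT
    have hT0 : 0 ≤ T := le_csInf hBne fun t ht => ht.1
    have hbefore : ∀ s, 0 ≤ s → s < T → 0 < h s ∧ 0 < deriv h s := by
      intro s hs hsT
      by_contra hcs
      have : T ≤ s := csInf_le hBbdd (by
        refine ⟨hs, ?_⟩
        push_neg at hcs
        by_cases h1 : 0 < h s
        · exact Or.inr (hcs h1)
        · exact Or.inl (not_lt.1 h1))
      exact absurd hsT (not_lt.2 this)
    obtain ⟨h'ge, hge⟩ := key T hT0 hbefore
    have hTmem : (T : ℝ) ∈ Icc (0:ℝ) T := right_mem_Icc.2 hT0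
    have hhT : 0 < h T := lt_of_lt_of_le zero_lt_one (hge T hTmem)
    have hh'T : 0 < deriv h T := lt_of_lt_of_le zero_lt_one (h'ge T hTmem)
    -- positivity extends slightly beyond T
    have hev : ∀ᶠ s in nhds T, 0 < h s ∧ 0 < deriv h s := by
      have e1 : ∀ᶠ s in nhds T, 0 < h s :=
        continuousAt_const.eventually_lt (hdiff T hT0).1.continuousAt hhT
      have e2 : ∀ᶠ s in nhds T, 0 < deriv h s :=
        continuousAt_const.eventually_lt (hdiff T hT0).2.continuousAt hh'T
      exact e1.and e2
    rw [Metric.eventually_nhds_iff] at hev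
    obtain ⟨ε, hε, hball⟩ := hev
    obtain ⟨b, hbB, hbt⟩ := (csInf_lt_iff hBbdd hBne).1 (by linarith : T < T + ε)
    have hbT : T ≤ b := csInf_le hBbdd hbB
    have : 0 < h b ∧ 0 < deriv h b := hball (by
      rw [Real.dist_eq, abs_lt]; constructor <;> linarith)
    rcases hbB.2 with hb | hb <;> linarith [this.1, this.2]
  -- Step 2: h ≥ 1 and deriv h ≥ 1 on [0, ∞)
  have ge1 : ∀ t : ℝ, 0 ≤ t → 1 ≤ h t ∧ 1 ≤ deriv h t := by
    intro t ht
    obtain ⟨h'ge, hge⟩ := key t ht (fun s hs _ => pos s hs)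
    exact ⟨hge t (right_mem_Icc.2 ht), h'ge t (right_mem_Icc.2 ht)⟩
  -- Step 3: blow up. g t = (deriv h t)⁻¹ + t is antitone on [0,2]
  set g : ℝ → ℝ := fun t => (deriv h t)⁻¹ + t with hg
  have hne : ∀ t : ℝ, 0 ≤ t → deriv h t ≠ 0 := fun t ht =>
    ne_of_gt (pos t ht).2
  have hgderiv : ∀ t : ℝ, 0 ≤ t →
      HasDerivAt g (-(deriv (deriv h) t) / (deriv h t) ^ 2 + 1) t := by
    intro t ht
    have h1 : HasDerivAt (deriv h) (deriv (deriv h) t) t := (hdiff t ht).2.hasDerivAt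
    have h2 := h1.inv (hne t ht)
    exact h2.add (hasDerivAt_id t)
  have hganti : AntitoneOn g (Icc (0:ℝ) 2) := by
    apply antitoneOn_of_deriv_nonpos (convex_Icc 0 2)
    · intro s hs
      exact ((hgderiv s hs.1).continuousAt).continuousWithinAt
    · rw [interior_Icc]
      intro s hs
      exact (hgderiv s hs.1.le).differentiableAt.differentiableWithinAt
    · rw [interior_Icc]
      intro s hs
      rw [(hgderiv s hs.1.le).deriv]
      rw [hode s hs.1.le]
      have h1 : 1 ≤ h s := (ge1 s hs.1.le).1
      have h2 : (deriv h s) ^ 2 ≠ 0 := pow_ne_zero 2 (hne s hs.1.le)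
      have heq : (deriv h s ^ 2 * h s) / (deriv h s ^ 2) = h s := by field_simp; exact div_self (hne s hs.1.le)
      rw [neg_div, heq]
      linarith
  have hg2 : g 2 ≤ g 0 := hganti (left_mem_Icc.2 (by norm_num))
    (right_mem_Icc.2 (by norm_num)) (by norm_num)
  have : (deriv h 2)⁻¹ + 2 ≤ (deriv h 0)⁻¹ + 0 := hg2
  rw [h'0] at this
  have hpos2 : 0 < (deriv h 2)⁻¹ := inv_pos.2 (pos 2 (by norm_num)).2
  norm_num at this
  linarith
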